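/- Let γ ∈ S_n be the n-cycle with γ(i) = i+1 for i < n and γ(n) = 1. Then γ · T_m^{(n)}(u;p;ℏ; z_2,...,z_n,z_1) · γ^{-1} = T_m^{(n)}(u;p;ℏ; z_1,z_2,...,z_n), where T_m^{(n)}(u;p;ℏ;w_1,...,w_n) = Tr_m^p( θ_m(A^{(m)}) (u - w_n + ℏΣ_i σ_{n,n+i}) ··· (u - w_1 + ℏΣ_i σ_{1,n+i}) ). -/

import Mathlib

noncomputable section
open Equiv Finset

namespace Bethe

/-- The number of orbits (cycles, including fixed points) of a permutation of `{1,...,k}`. -/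
def cyc {k : ℕ} (σ : Equiv.Perm (Fin k)) : ℕ :=
  σ.cycleType.card + (k - σ.support.card)

variable {n m : ℕ}

lemma exists_return (σ : Equiv.Perm (Fin (n + m))) (i : Fin n) :
    ∃ k : ℕ, 0 < k ∧ ((σ ^ k) (Fin.castAdd m i)).val < n := by
  refine ⟨orderOf σ, orderOf_pos σ, ?_⟩
  simp [pow_orderOf_eq_one]

/-- The first-return time of the symbol `i ≤ n` under `σ ∈ S_{n+m}`. -/
def retTime (σ : Equiv.Perm (Fin (n + m))) (i : Fin n) : ℕ :=
  Nat.find (exists_return σ i)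

/-- The first-return map: the underlying function of the permutation obtained from `σ`
by deleting the symbols `> n` from its cycle decomposition. -/
def delFun (σ : Equiv.Perm (Fin (n + m))) (i : Fin n) : Fin n :=
  ⟨((σ ^ retTime σ i) (Fin.castAdd m i)).val, (Nat.find_spec (exists_return σ i)).2⟩

lemma delFun_injective (σ : Equiv.Perm (Fin (n + m))) : Function.Injective (delFun σ) := by
  have key : ∀ i j : Fin n, retTime σ i ≤ retTime σ j → delFun σ i = delFun σ j → i = j := by
    intro i j hle h
    have h' : (σ ^ retTime σ i) (Fin.castAdd m i) = (σ ^ retTime σ j) (Fin.castAdd m j) := by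
      apply Fin.ext
      simpa [delFun] using congrArg Fin.val h
    obtain ⟨d, hd⟩ : ∃ d, retTime σ j = retTime σ i + d :=
      ⟨retTime σ j - retTime σ i, (Nat.add_sub_cancel' hle).symm⟩
    have h2 : Fin.castAdd m i = (σ ^ d) (Fin.castAdd m j) := by
      apply (σ ^ retTime σ i).injective
      rw [h', hd, pow_add, Equiv.Perm.mul_apply]
    rcases Nat.eq_zero_or_pos d with h0 | hpos
    · have h3 : Fin.castAdd m i = Fin.castAdd m j := by simpa [h0] using h2
      exact Fin.ext (by simpa using congrArg Fin.val h3)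
    · exfalso
      have hdlt : d < retTime σ j := by
        have h1 : 0 < retTime σ i := (Nat.find_spec (exists_return σ i)).1
        omega
      exact Nat.find_min (exists_return σ j) hdlt
        ⟨hpos, by rw [← h2]; simp⟩
  intro i j h
  rcases le_total (retTime σ i) (retTime σ j) with hle | hle
  · exact key i j hle h
  · exact (key j i hle h.symm).symm

/-- The permutation `τ ∈ S_n` obtained from `σ ∈ S_{n+m}` by removing the symbols `> n`
from the cycle decomposition of `σ`. -/
def del (σ : Equiv.Perm (Fin (n + m))) : Equiv.Perm (Fin n) :=
  Equiv.ofBijective (delFun σ) (Finite.injective_iff_bijective.mp (delFun_injective σ))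

/-- The linear map `Tr_m^p : ℂ[S_{n+m}] → ℂ[S_n]`, `σ ↦ p^{c(σ) - c(τ)} τ` where
`τ = del σ` and `c` counts orbits. -/
def TrP (p : ℂ) :
    MonoidAlgebra ℂ (Equiv.Perm (Fin (n + m))) →ₗ[ℂ] MonoidAlgebra ℂ (Equiv.Perm (Fin n)) :=
  (Finsupp.lsum ℂ fun σ =>
    LinearMap.toSpanSingleton ℂ _
      ((p ^ (cyc σ - cyc (del σ))) • MonoidAlgebra.of ℂ (Equiv.Perm (Fin n)) (del σ)))
    ∘ₗ (MonoidAlgebra.coeffLinearEquiv ℂ).toLinearMap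


/-- The embedding `Fin m ↪ Fin (n+m)`, `i ↦ n + i`, inducing `θ_m : S_m → S_{n+m}`. -/
def natAddEmb (n m : ℕ) : Fin m ↪ Fin (n + m) :=
  ⟨Fin.natAdd n, fun a b h => by
    apply Fin.ext
    have := congrArg Fin.val h
    simpa using this⟩

/-- The image `θ_m(A^{(m)}) ∈ ℂ[S_{n+m}]` of the antisymmetrizer
`A^{(m)} = (1/m!) Σ_{σ ∈ S_m} sign(σ) σ` under the embedding induced by `i ↦ n+i`. -/
def thetaA (n m : ℕ) : MonoidAlgebra ℂ (Equiv.Perm (Fin (n + m))) :=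
  ((m.factorial : ℂ))⁻¹ •
    ∑ σ : Equiv.Perm (Fin m),
      ((Equiv.Perm.sign σ : ℤ) : ℂ) •
        MonoidAlgebra.of ℂ (Equiv.Perm (Fin (n + m))) (σ.viaEmbedding (natAddEmb n m))

/-- The ordered product
`(u - z_n + ℏ Σ_i σ_{n,n+i}) ⋯ (u - z_1 + ℏ Σ_i σ_{1,n+i}) ∈ ℂ[S_{n+m}]`
(the factor for the index `n` is leftmost). -/
def bigProd (n m : ℕ) (z : Fin n → ℂ) (ℏ u : ℂ) :
    MonoidAlgebra ℂ (Equiv.Perm (Fin (n + m))) :=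
  (((List.finRange n).reverse).map fun a =>
    algebraMap ℂ (MonoidAlgebra ℂ (Equiv.Perm (Fin (n + m)))) (u - z a)
      + ℏ • ∑ i : Fin m,
          MonoidAlgebra.of ℂ (Equiv.Perm (Fin (n + m)))
            (Equiv.swap (Fin.castAdd m a) (Fin.natAdd n i))).prod

/-- `T_m^{(n)}(u;p;ℏ;z_1,...,z_n) ∈ ℂ[S_n]` (the indeterminate `u` is evaluated at a
complex number): `T_m^{(n)} = Tr_m^p(θ_m(A^{(m)}) (u - z_n + ℏΣσ_{n,n+i}) ⋯ (u - z_1 + ℏΣσ_{1,n+i}))`. -/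
def Tnm (n m : ℕ) (z : Fin n → ℂ) (p ℏ u : ℂ) : MonoidAlgebra ℂ (Equiv.Perm (Fin n)) :=
  TrP p (thetaA n m * bigProd n m z ℏ u)

/-! ### Auxiliary development -/

lemma conj_pow_grp {G : Type*} [Group G] (a b : G) (k : ℕ) :
    (a * b * a⁻¹) ^ k = a * b ^ k * a⁻¹ := by
  induction k with
  | zero => simp
  | succ i ih => rw [pow_succ, pow_succ, ih]; group

lemma retTime_eq (σ : Equiv.Perm (Fin (n + m))) (j : Fin n) (K : ℕ) (hK : 0 < K)
    (hs : ((σ ^ K) (Fin.castAdd m j)).val < n)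
    (hmin : ∀ k, 0 < k → k < K → ¬ ((σ ^ k) (Fin.castAdd m j)).val < n) :
    retTime σ j = K := by
  unfold retTime
  rw [Nat.find_eq_iff]
  exact ⟨⟨hK, hs⟩, fun k hk hh => hmin k hh.1 hk hh.2⟩

lemma delFun_val_eq (σ : Equiv.Perm (Fin (n + m))) (j : Fin n) (K : ℕ) (hK : 0 < K)
    (hs : ((σ ^ K) (Fin.castAdd m j)).val < n)
    (hmin : ∀ k, 0 < k → k < K → ¬ ((σ ^ k) (Fin.castAdd m j)).val < n) :
    (delFun σ j : ℕ) = ((σ ^ K) (Fin.castAdd m j)).val := by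
  simp [delFun, retTime_eq σ j K hK hs hmin]

lemma cyc_conj {k : ℕ} (π σ : Equiv.Perm (Fin k)) : cyc (π * σ * π⁻¹) = cyc σ := by
  unfold cyc
  rw [Equiv.Perm.cycleType_conj, Equiv.Perm.card_support_conj]

lemma del_apply (σ : Equiv.Perm (Fin (n + m))) (j : Fin n) : del σ j = delFun σ j := rfl

lemma TrP_single (p : ℂ) (σ : Equiv.Perm (Fin (n + m))) (c : ℂ) :
    TrP p (MonoidAlgebra.single σ c)
      = c • ((p ^ (cyc σ - cyc (del σ))) • MonoidAlgebra.of ℂ (Equiv.Perm (Fin n)) (del σ)) := by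
  unfold TrP
  erw [LinearMap.comp_apply, Finsupp.lsum_single]
  rfl

lemma TrP_of (p : ℂ) (σ : Equiv.Perm (Fin (n + m))) :
    TrP p (MonoidAlgebra.of ℂ (Equiv.Perm (Fin (n + m))) σ)
      = (p ^ (cyc σ - cyc (del σ))) • MonoidAlgebra.of ℂ (Equiv.Perm (Fin n)) (del σ) := by
  rw [MonoidAlgebra.of_apply, TrP_single, one_smul]

/-- The embedding `Fin n ↪ Fin (n+m)` via `castAdd`. -/
def cAEmb (n m : ℕ) : Fin n ↪ Fin (n + m) :=
  ⟨Fin.castAdd m, fun a b h => Fin.ext (by simpa using congrArg Fin.val h)⟩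

/-- The extension of `γ ∈ S_n` to `S_{n+m}` fixing the last `m` symbols. -/
def Gam (γ : Equiv.Perm (Fin n)) : Equiv.Perm (Fin (n + m)) :=
  γ.viaEmbedding (cAEmb n m)

lemma mem_range_cAEmb (x : Fin (n + m)) : x ∈ Set.range (cAEmb n m) ↔ x.val < n := by
  constructor
  · rintro ⟨j, rfl⟩; exact j.2
  · intro h; exact ⟨⟨x.val, h⟩, Fin.ext rfl⟩

lemma Gam_castAdd (γ : Equiv.Perm (Fin n)) (j : Fin n) :
    Gam γ (Fin.castAdd m j) = Fin.castAdd m (γ j) :=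
  γ.viaEmbedding_apply _ j

lemma Gam_big (γ : Equiv.Perm (Fin n)) (x : Fin (n + m)) (hx : ¬ x.val < n) : Gam γ x = x :=
  γ.viaEmbedding_apply_of_notMem _ x (by rw [mem_range_cAEmb]; exact hx)

lemma Gam_small_iff (γ : Equiv.Perm (Fin n)) (x : Fin (n + m)) :
    ((Gam γ) x).val < n ↔ x.val < n := by
  by_cases h : x.val < n
  · have hx : x = Fin.castAdd m ⟨x.val, h⟩ := Fin.ext rfl
    rw [hx, Gam_castAdd]
    exact iff_of_true (by simpa using (γ ⟨x.val, h⟩).2) (by simpa using h)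
  · rw [Gam_big γ x h]

lemma Gam_inv (γ : Equiv.Perm (Fin n)) : (Gam γ⁻¹ : Equiv.Perm (Fin (n + m))) = (Gam γ)⁻¹ :=
  map_inv (Equiv.Perm.viaEmbeddingHom (cAEmb n m)) γ

lemma del_conj (γ : Equiv.Perm (Fin n)) (σ : Equiv.Perm (Fin (n + m))) :
    del (Gam γ * σ * (Gam γ)⁻¹) = γ * del σ * γ⁻¹ := by
  apply Equiv.ext
  intro j
  have hrhs : (γ * del σ * γ⁻¹) j = γ (delFun σ (γ⁻¹ j)) := rfl
  rw [hrhs, del_apply]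
  have hK : 0 < retTime σ (γ⁻¹ j) := (Nat.find_spec (exists_return σ (γ⁻¹ j))).1
  have key : ∀ k : ℕ, (((Gam γ * σ * (Gam γ)⁻¹ : Equiv.Perm (Fin (n + m))) ^ k)) (Fin.castAdd m j)
      = Gam γ ((σ ^ k) (Fin.castAdd m (γ⁻¹ j))) := by
    intro k
    rw [conj_pow_grp]
    have h2 : (Gam γ)⁻¹ (Fin.castAdd m j) = Fin.castAdd m (γ⁻¹ j) := by
      rw [← Gam_inv, Gam_castAdd]
    simp [Equiv.Perm.mul_apply, h2]
  have hs' : ((σ ^ retTime σ (γ⁻¹ j)) (Fin.castAdd m (γ⁻¹ j))).val < n :=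
    (Nat.find_spec (exists_return σ (γ⁻¹ j))).2
  have hmin' : ∀ k, 0 < k → k < retTime σ (γ⁻¹ j) →
      ¬ ((σ ^ k) (Fin.castAdd m (γ⁻¹ j))).val < n := fun k h1 h2 hcon =>
    Nat.find_min (exists_return σ (γ⁻¹ j)) h2 ⟨h1, hcon⟩
  apply Fin.ext
  rw [delFun_val_eq _ j (retTime σ (γ⁻¹ j)) hK ?_ ?_]
  · rw [key]
    have hval : (σ ^ retTime σ (γ⁻¹ j)) (Fin.castAdd m (γ⁻¹ j))
        = Fin.castAdd m (delFun σ (γ⁻¹ j)) := Fin.ext rfl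
    rw [hval, Gam_castAdd]
    rfl
  · rw [key, Gam_small_iff]; exact hs'
  · intro k h1 h2; rw [key, Gam_small_iff]; exact hmin' k h1 h2

lemma TrP_conj (p : ℂ) (γ : Equiv.Perm (Fin n))
    (X : MonoidAlgebra ℂ (Equiv.Perm (Fin (n + m)))) :
    TrP p (MonoidAlgebra.of ℂ (Equiv.Perm (Fin (n + m))) (Gam γ) * X
        * MonoidAlgebra.of ℂ (Equiv.Perm (Fin (n + m))) (Gam γ)⁻¹)
      = MonoidAlgebra.of ℂ (Equiv.Perm (Fin n)) γ * TrP p X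
        * MonoidAlgebra.of ℂ (Equiv.Perm (Fin n)) γ⁻¹ := by
  induction X using MonoidAlgebra.induction_linear with
  | zero => simp
  | add f g hf hg => rw [mul_add, add_mul, map_add, map_add, hf, hg, mul_add, add_mul]
  | single σ c =>
    have h1 : (MonoidAlgebra.single σ c : MonoidAlgebra ℂ (Equiv.Perm (Fin (n + m))))
        = c • MonoidAlgebra.of ℂ (Equiv.Perm (Fin (n + m))) σ := by
      rw [MonoidAlgebra.of_apply, MonoidAlgebra.smul_single, smul_eq_mul, mul_one]
    rw [h1, mul_smul_comm, smul_mul_assoc, map_smul, map_smul, mul_smul_comm, smul_mul_assoc]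
    congr 1
    rw [← map_mul, ← map_mul, TrP_of, TrP_of, mul_smul_comm, smul_mul_assoc,
      ← map_mul, ← map_mul, del_conj]
    have hc1 : cyc (Gam γ * σ * (Gam γ)⁻¹) = cyc σ := cyc_conj _ _
    have hc2 : cyc (γ * del σ * γ⁻¹) = cyc (del σ) := cyc_conj _ _
    rw [hc1, hc2]

lemma delFun_swap_comm (a b : Fin (n + m)) (ha : a.val < n) (hb : ¬ b.val < n)
    (ρ : Equiv.Perm (Fin (n + m))) (hρ : ρ a = a) (j : Fin n) :
    delFun (ρ * Equiv.swap a b) j = delFun (Equiv.swap a b * ρ) j := by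
  set s := Equiv.swap a b with hs
  set σ₁ := s * ρ with hσ₁
  set σ₂ := ρ * s with hσ₂
  set cj := Fin.castAdd m j with hcj
  have hab : a ≠ b := fun h => hb (h ▸ ha)
  have hss : s * s = 1 := Equiv.swap_mul_self a b
  have happ : ∀ (τ : Equiv.Perm (Fin (n + m))) (k : ℕ) (x : Fin (n + m)),
      (τ ^ (k + 1)) x = τ ((τ ^ k) x) := by
    intro τ k x
    rw [pow_succ']
    rfl
  have hpow : ∀ k : ℕ, σ₂ ^ k = s * σ₁ ^ k * s := by
    intro k
    have h0 : σ₂ = s * σ₁ * s⁻¹ := by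
      rw [hσ₂, hσ₁, Equiv.swap_inv, ← mul_assoc, hss, one_mul]
    rw [h0, conj_pow_grp, Equiv.swap_inv]
  have hsa : s a = b := Equiv.swap_apply_left a b
  have hsb : s b = a := Equiv.swap_apply_right a b
  have hσ₁a : σ₁ a = b := by
    rw [hσ₁]
    simp only [Equiv.Perm.mul_apply, hρ, hsa]
  have hsmallb : ∀ x : Fin (n + m), x.val < n → x ≠ b := fun x hx hxb => hb (hxb ▸ hx)
  have hback : ∀ (x : Fin (n + m)) (k : ℕ), (σ₁ ^ (k + 1)) x = b → (σ₁ ^ k) x = a := by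
    intro x k hk
    apply σ₁.injective
    rw [← happ σ₁ k x]
    exact hk.trans hσ₁a.symm
  have hKspec := Nat.find_spec (exists_return σ₁ j)
  set K := retTime σ₁ j with hKdef
  have hKpos : 0 < K := hKspec.1
  have hKsmall : ((σ₁ ^ K) cj).val < n := hKspec.2
  have hmin : ∀ k, 0 < k → k < K → ¬ ((σ₁ ^ k) cj).val < n := fun k h1 h2 hcon =>
    Nat.find_min (exists_return σ₁ j) h2 ⟨h1, hcon⟩
  have hd1 : (delFun σ₁ j : ℕ) = ((σ₁ ^ K) cj).val := rfl
  by_cases hja : cj = a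
  · -- starting point is `a`
    have hscj : s cj = b := by rw [hja, hsa]
    have hy2 : ∀ k : ℕ, (σ₂ ^ k) cj = s ((σ₁ ^ (k + 1)) cj) := by
      intro k
      have h1 : (σ₂ ^ k) cj = s ((σ₁ ^ k) (s cj)) := by
        rw [hpow]
        rfl
      rw [h1, hscj]
      congr 1
      rw [← hσ₁a, ← hja, ← Equiv.Perm.mul_apply, ← pow_succ]
    have hKne1 : K ≠ 1 := by
      intro h1
      rw [h1] at hKsmall
      rw [pow_one, hja, hσ₁a] at hKsmall
      exact hb hKsmall
    have hK2 : 2 ≤ K := by omega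
    have hnotb' : ∀ k, 2 ≤ k → k ≤ K → (σ₁ ^ k) cj ≠ b := by
      intro k h2 hkK hkb
      obtain ⟨k', rfl⟩ : ∃ k', k = k' + 1 := ⟨k - 1, by omega⟩
      have ha' := hback cj k' hkb
      have : ¬ ((σ₁ ^ k') cj).val < n := hmin k' (by omega) (by omega)
      rw [ha'] at this
      exact this ha
    by_cases hKa : (σ₁ ^ K) cj = a
    · -- first σ₂-return at time K with value a
      apply Fin.ext
      rw [delFun_val_eq σ₂ j K hKpos ?_ ?_, hd1]
      · rw [hy2, happ, hKa, hσ₁a, hsb]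
      · rw [hy2, happ, hKa, hσ₁a, hsb]
        exact ha
      · intro k h1 h2
        rw [hy2]
        rcases Nat.lt_or_ge (k + 1) K with hlt | hge
        · have hns : ¬ ((σ₁ ^ (k + 1)) cj).val < n := hmin (k + 1) (by omega) hlt
          have hne_a : (σ₁ ^ (k + 1)) cj ≠ a := fun h => hns (h ▸ ha)
          have hne_b : (σ₁ ^ (k + 1)) cj ≠ b := hnotb' (k + 1) (by omega) (by omega)
          rw [Equiv.swap_apply_of_ne_of_ne hne_a hne_b]
          exact hns
        · have hkK : k + 1 = K := by omega
          rw [hkK, hKa, hsa]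
          exact hb
    · -- first σ₂-return at time K - 1 with the same value
      obtain ⟨K', hK'⟩ : ∃ K', K = K' + 1 := ⟨K - 1, by omega⟩
      apply Fin.ext
      rw [delFun_val_eq σ₂ j K' (by omega) ?_ ?_, hd1]
      · rw [hy2, ← hK', Equiv.swap_apply_of_ne_of_ne hKa (hsmallb _ hKsmall)]
      · rw [hy2, ← hK', Equiv.swap_apply_of_ne_of_ne hKa (hsmallb _ hKsmall)]
        exact hKsmall
      · intro k h1 h2
        rw [hy2]
        have hns : ¬ ((σ₁ ^ (k + 1)) cj).val < n := hmin (k + 1) (by omega) (by omega)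
        have hne_a : (σ₁ ^ (k + 1)) cj ≠ a := fun h => hns (h ▸ ha)
        have hne_b : (σ₁ ^ (k + 1)) cj ≠ b := hnotb' (k + 1) (by omega) (by omega)
        rw [Equiv.swap_apply_of_ne_of_ne hne_a hne_b]
        exact hns
  · -- starting point differs from `a`
    have hscj : s cj = cj :=
      Equiv.swap_apply_of_ne_of_ne hja (hsmallb cj j.2)
    have hy2 : ∀ k : ℕ, (σ₂ ^ k) cj = s ((σ₁ ^ k) cj) := by
      intro k
      have h1 : (σ₂ ^ k) cj = s ((σ₁ ^ k) (s cj)) := by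
        rw [hpow]
        rfl
      rw [h1, hscj]
    have hnotb : ∀ k, 0 < k → k ≤ K → (σ₁ ^ k) cj ≠ b := by
      intro k h1 hkK hkb
      obtain ⟨k', rfl⟩ : ∃ k', k = k' + 1 := ⟨k - 1, by omega⟩
      have ha' := hback cj k' hkb
      rcases Nat.eq_zero_or_pos k' with h0 | hp
      · rw [h0, pow_zero] at ha'
        exact hja ha'
      · have : ¬ ((σ₁ ^ k') cj).val < n := hmin k' hp (by omega)
        rw [ha'] at this
        exact this ha
    by_cases hKa : (σ₁ ^ K) cj = a
    · -- first σ₂-return at time K + 1 with value a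
      apply Fin.ext
      rw [delFun_val_eq σ₂ j (K + 1) (by omega) ?_ ?_, hd1]
      · rw [hy2, happ, hKa, hσ₁a, hsb]
      · rw [hy2, happ, hKa, hσ₁a, hsb]
        exact ha
      · intro k h1 h2
        rw [hy2]
        rcases Nat.lt_or_ge k K with hlt | hge
        · have hns : ¬ ((σ₁ ^ k) cj).val < n := hmin k h1 hlt
          have hne_a : (σ₁ ^ k) cj ≠ a := fun h => hns (h ▸ ha)
          have hne_b : (σ₁ ^ k) cj ≠ b := hnotb k h1 (by omega)
          rw [Equiv.swap_apply_of_ne_of_ne hne_a hne_b]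
          exact hns
        · have hkK : k = K := by omega
          rw [hkK, hKa, hsa]
          exact hb
    · -- first σ₂-return at time K with the same value
      apply Fin.ext
      rw [delFun_val_eq σ₂ j K hKpos ?_ ?_, hd1]
      · rw [hy2, Equiv.swap_apply_of_ne_of_ne hKa (hsmallb _ hKsmall)]
      · rw [hy2, Equiv.swap_apply_of_ne_of_ne hKa (hsmallb _ hKsmall)]
        exact hKsmall
      · intro k h1 h2
        rw [hy2]
        have hns : ¬ ((σ₁ ^ k) cj).val < n := hmin k h1 h2
        have hne_a : (σ₁ ^ k) cj ≠ a := fun h => hns (h ▸ ha)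
        have hne_b : (σ₁ ^ k) cj ≠ b := hnotb k h1 (by omega)
        rw [Equiv.swap_apply_of_ne_of_ne hne_a hne_b]
        exact hns

lemma del_swap_comm (a b : Fin (n + m)) (ha : a.val < n) (hb : ¬ b.val < n)
    (ρ : Equiv.Perm (Fin (n + m))) (hρ : ρ a = a) :
    del (ρ * Equiv.swap a b) = del (Equiv.swap a b * ρ) :=
  Equiv.ext fun j => delFun_swap_comm a b ha hb ρ hρ j

lemma cyc_swap_comm (a b : Fin (n + m)) (ρ : Equiv.Perm (Fin (n + m))) :
    cyc (ρ * Equiv.swap a b) = cyc (Equiv.swap a b * ρ) := by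
  have h := cyc_conj (Equiv.swap a b) (ρ * Equiv.swap a b)
  have h2 : Equiv.swap a b * (ρ * Equiv.swap a b) * (Equiv.swap a b)⁻¹
      = Equiv.swap a b * ρ := by
    rw [Equiv.swap_inv, mul_assoc, mul_assoc, Equiv.swap_mul_self, mul_one]
  rw [h2] at h
  exact h.symm

lemma TrP_of_swap_comm (p : ℂ) (a b : Fin (n + m)) (ha : a.val < n) (hb : ¬ b.val < n)
    (ρ : Equiv.Perm (Fin (n + m))) (hρ : ρ a = a) :
    TrP p (MonoidAlgebra.of ℂ (Equiv.Perm (Fin (n + m))) (Equiv.swap a b * ρ))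
      = TrP p (MonoidAlgebra.of ℂ (Equiv.Perm (Fin (n + m))) (ρ * Equiv.swap a b)) := by
  rw [TrP_of, TrP_of, del_swap_comm a b ha hb ρ hρ, cyc_swap_comm a b ρ]

/-- Span of the permutations fixing `a`. -/
def stab (a : Fin (n + m)) : Submodule ℂ (MonoidAlgebra ℂ (Equiv.Perm (Fin (n + m)))) :=
  Submodule.span ℂ (MonoidAlgebra.of ℂ (Equiv.Perm (Fin (n + m))) '' {ρ | ρ a = a})

lemma of_mem_stab {a : Fin (n + m)} {ρ : Equiv.Perm (Fin (n + m))} (h : ρ a = a) :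
    MonoidAlgebra.of ℂ (Equiv.Perm (Fin (n + m))) ρ ∈ stab a :=
  Submodule.subset_span ⟨ρ, h, rfl⟩

lemma one_mem_stab (a : Fin (n + m)) :
    (1 : MonoidAlgebra ℂ (Equiv.Perm (Fin (n + m)))) ∈ stab a := by
  have h1 : (1 : MonoidAlgebra ℂ (Equiv.Perm (Fin (n + m))))
      = MonoidAlgebra.of ℂ (Equiv.Perm (Fin (n + m))) 1 := (map_one _).symm
  rw [h1]
  exact of_mem_stab rfl

lemma mul_mem_stab {a : Fin (n + m)} {X Y : MonoidAlgebra ℂ (Equiv.Perm (Fin (n + m)))}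
    (hX : X ∈ stab a) (hY : Y ∈ stab a) : X * Y ∈ stab a := by
  induction hX using Submodule.span_induction with
  | mem x hx =>
    obtain ⟨ρ, hρ, rfl⟩ := hx
    induction hY using Submodule.span_induction with
    | mem y hy =>
      obtain ⟨ρ', hρ', rfl⟩ := hy
      rw [← map_mul]
      exact of_mem_stab (by rw [Equiv.Perm.mul_apply, hρ', hρ])
    | zero => rw [mul_zero]; exact zero_mem _
    | add y z _ _ hy' hz' => rw [mul_add]; exact add_mem hy' hz'
    | smul c y _ hy' => rw [mul_smul_comm]; exact Submodule.smul_mem _ c hy'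
  | zero => rw [zero_mul]; exact zero_mem _
  | add x y _ _ hx' hy' => rw [add_mul]; exact add_mem hx' hy'
  | smul c x _ hx' => rw [smul_mul_assoc]; exact Submodule.smul_mem _ c hx'

lemma list_prod_mem_stab {a : Fin (n + m)} (l : List (MonoidAlgebra ℂ (Equiv.Perm (Fin (n + m)))))
    (h : ∀ x ∈ l, x ∈ stab a) : l.prod ∈ stab a := by
  induction l with
  | nil => simpa using one_mem_stab a
  | cons x t ih =>
    rw [List.prod_cons]
    exact mul_mem_stab (h x (by simp)) (ih fun y hy => h y (by simp [hy]))

lemma TrP_swap_stab (p : ℂ) (a b : Fin (n + m)) (ha : a.val < n) (hb : ¬ b.val < n)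
    {R : MonoidAlgebra ℂ (Equiv.Perm (Fin (n + m)))} (hR : R ∈ stab a) :
    TrP p (MonoidAlgebra.of ℂ (Equiv.Perm (Fin (n + m))) (Equiv.swap a b) * R)
      = TrP p (R * MonoidAlgebra.of ℂ (Equiv.Perm (Fin (n + m))) (Equiv.swap a b)) := by
  induction hR using Submodule.span_induction with
  | mem x hx =>
    obtain ⟨ρ, hρ, rfl⟩ := hx
    rw [← map_mul, ← map_mul]
    exact TrP_of_swap_comm p a b ha hb ρ hρ
  | zero => simp
  | add x y _ _ hx' hy' => rw [mul_add, add_mul, map_add, map_add, hx', hy']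
  | smul c x _ hx' => rw [mul_smul_comm, smul_mul_assoc, map_smul, map_smul, hx']

lemma mem_range_natAddEmb (x : Fin (n + m)) : x ∈ Set.range (natAddEmb n m) ↔ ¬ x.val < n := by
  constructor
  · rintro ⟨i, rfl⟩
    simp only [natAddEmb, Function.Embedding.coeFn_mk, Fin.coe_natAdd]
    show ¬ (n + i.val < n)
    omega
  · intro h
    refine ⟨⟨x.val - n, by omega⟩, Fin.ext ?_⟩
    simp only [natAddEmb, Function.Embedding.coeFn_mk, Fin.coe_natAdd]
    show n + (x.val - n) = x.val
    omega

lemma theta_castAdd (π : Equiv.Perm (Fin m)) (j : Fin n) :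
    π.viaEmbedding (natAddEmb n m) (Fin.castAdd m j) = Fin.castAdd m j :=
  π.viaEmbedding_apply_of_notMem _ _
    (by rw [mem_range_natAddEmb]; exact not_not_intro (by simpa using j.2))

lemma theta_natAdd (π : Equiv.Perm (Fin m)) (i : Fin m) :
    π.viaEmbedding (natAddEmb n m) (Fin.natAdd n i) = Fin.natAdd n (π i) :=
  π.viaEmbedding_apply _ i

lemma Gam_theta_comm (γ : Equiv.Perm (Fin n)) (π : Equiv.Perm (Fin m)) :
    Gam γ * π.viaEmbedding (natAddEmb n m) = π.viaEmbedding (natAddEmb n m) * Gam γ := by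
  apply Equiv.ext
  intro x
  by_cases h : x.val < n
  · have hx : x = Fin.castAdd m ⟨x.val, h⟩ := Fin.ext rfl
    rw [hx, Equiv.Perm.mul_apply, Equiv.Perm.mul_apply, theta_castAdd, Gam_castAdd, theta_castAdd]
  · obtain ⟨i, rfl⟩ : ∃ i, Fin.natAdd n i = x :=
      ⟨⟨x.val - n, by omega⟩, Fin.ext (by simp only [Fin.coe_natAdd]; omega)⟩
    rw [Equiv.Perm.mul_apply, Equiv.Perm.mul_apply, theta_natAdd,
      Gam_big γ _ (by simp only [Fin.coe_natAdd]; omega),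
      Gam_big γ _ (by simp only [Fin.coe_natAdd]; omega), theta_natAdd]

lemma Gam_thetaA_comm (γ : Equiv.Perm (Fin n)) :
    MonoidAlgebra.of ℂ (Equiv.Perm (Fin (n + m))) (Gam γ) * thetaA n m
      = thetaA n m * MonoidAlgebra.of ℂ (Equiv.Perm (Fin (n + m))) (Gam γ) := by
  unfold thetaA
  rw [mul_smul_comm, smul_mul_assoc]
  congr 1
  rw [Finset.mul_sum, Finset.sum_mul]
  refine Finset.sum_congr rfl fun π _ => ?_
  rw [mul_smul_comm, smul_mul_assoc]
  congr 1
  rw [← map_mul, ← map_mul, Gam_theta_comm]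

lemma thetaA_mem_stab (a : Fin n) : thetaA n m ∈ stab (Fin.castAdd m a) := by
  unfold thetaA
  exact Submodule.smul_mem _ _ (Submodule.sum_mem _ fun π _ =>
    Submodule.smul_mem _ _ (of_mem_stab (theta_castAdd π a)))

lemma swap_fix_castAdd (a a' : Fin n) (h : a ≠ a') (i : Fin m) :
    Equiv.swap (Fin.castAdd m a') (Fin.natAdd n i) (Fin.castAdd m a) = Fin.castAdd m a :=
  Equiv.swap_apply_of_ne_of_ne
    (fun hc => h (Fin.ext (by simpa using congrArg Fin.val hc)))
    (fun hc => by
      have := congrArg Fin.val hc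
      simp only [Fin.coe_castAdd, Fin.coe_natAdd] at this
      omega)

/-- A single factor of the big product. -/
def factor (n m : ℕ) (ℏ u w : ℂ) (a : Fin n) : MonoidAlgebra ℂ (Equiv.Perm (Fin (n + m))) :=
  algebraMap ℂ (MonoidAlgebra ℂ (Equiv.Perm (Fin (n + m)))) (u - w)
    + ℏ • ∑ i : Fin m, MonoidAlgebra.of ℂ (Equiv.Perm (Fin (n + m)))
        (Equiv.swap (Fin.castAdd m a) (Fin.natAdd n i))

lemma bigProd_eq (z : Fin n → ℂ) (ℏ u : ℂ) :
    bigProd n m z ℏ u = (((List.finRange n).reverse).map fun a => factor n m ℏ u (z a) a).prod :=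
  rfl

lemma factor_mem_stab (ℏ u w : ℂ) (a a' : Fin n) (h : a ≠ a') :
    factor n m ℏ u w a' ∈ stab (Fin.castAdd m a) := by
  refine add_mem ?_ (Submodule.smul_mem _ _ (Submodule.sum_mem _ fun i _ =>
    of_mem_stab (swap_fix_castAdd a a' h i)))
  rw [Algebra.algebraMap_eq_smul_one]
  exact Submodule.smul_mem _ _ (one_mem_stab _)

lemma Gam_factor (γ : Equiv.Perm (Fin n)) (ℏ u w : ℂ) (a : Fin n) :
    MonoidAlgebra.of ℂ (Equiv.Perm (Fin (n + m))) (Gam γ) * factor n m ℏ u w a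
        * MonoidAlgebra.of ℂ (Equiv.Perm (Fin (n + m))) (Gam γ)⁻¹
      = factor n m ℏ u w (γ a) := by
  unfold factor
  rw [mul_add, add_mul]
  congr 1
  · rw [Algebra.algebraMap_eq_smul_one, mul_smul_comm, mul_one, smul_mul_assoc, ← map_mul,
      mul_inv_cancel, map_one]
  · rw [mul_smul_comm, smul_mul_assoc]
    congr 1
    rw [Finset.mul_sum, Finset.sum_mul]
    refine Finset.sum_congr rfl fun i _ => ?_
    rw [← map_mul, ← map_mul]
    congr 1
    rw [← Equiv.swap_apply_apply, Gam_castAdd, Gam_big γ _ (by simp only [Fin.coe_natAdd]; omega)]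

lemma thetaA_S_comm (a : Fin n) :
    thetaA n m * (∑ i : Fin m, MonoidAlgebra.of ℂ (Equiv.Perm (Fin (n + m)))
        (Equiv.swap (Fin.castAdd m a) (Fin.natAdd n i)))
      = (∑ i : Fin m, MonoidAlgebra.of ℂ (Equiv.Perm (Fin (n + m)))
        (Equiv.swap (Fin.castAdd m a) (Fin.natAdd n i))) * thetaA n m := by
  unfold thetaA
  rw [smul_mul_assoc, mul_smul_comm]
  congr 1
  rw [Finset.sum_mul, Finset.mul_sum]
  refine Finset.sum_congr rfl fun π _ => ?_
  rw [smul_mul_assoc, mul_smul_comm]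
  congr 1
  have hconj : ∀ i : Fin m,
      π.viaEmbedding (natAddEmb n m) * Equiv.swap (Fin.castAdd m a) (Fin.natAdd n i)
        = Equiv.swap (Fin.castAdd m a) (Fin.natAdd n (π i)) * π.viaEmbedding (natAddEmb n m) := by
    intro i
    rw [Equiv.mul_swap_eq_swap_mul, theta_castAdd, theta_natAdd]
  rw [Finset.mul_sum, Finset.sum_mul]
  calc ∑ i : Fin m, MonoidAlgebra.of ℂ (Equiv.Perm (Fin (n + m))) (π.viaEmbedding (natAddEmb n m))
          * MonoidAlgebra.of ℂ (Equiv.Perm (Fin (n + m)))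
            (Equiv.swap (Fin.castAdd m a) (Fin.natAdd n i))
      = ∑ i : Fin m, MonoidAlgebra.of ℂ (Equiv.Perm (Fin (n + m)))
          (Equiv.swap (Fin.castAdd m a) (Fin.natAdd n (π i))
            * π.viaEmbedding (natAddEmb n m)) := by
        refine Finset.sum_congr rfl fun i _ => ?_
        rw [← map_mul, hconj]
    _ = ∑ i : Fin m, MonoidAlgebra.of ℂ (Equiv.Perm (Fin (n + m)))
          (Equiv.swap (Fin.castAdd m a) (Fin.natAdd n i)
            * π.viaEmbedding (natAddEmb n m)) := by
        exact Equiv.sum_comp π fun b => MonoidAlgebra.of ℂ (Equiv.Perm (Fin (n + m)))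
          (Equiv.swap (Fin.castAdd m a) (Fin.natAdd n b) * π.viaEmbedding (natAddEmb n m))
    _ = ∑ i : Fin m, MonoidAlgebra.of ℂ (Equiv.Perm (Fin (n + m)))
          (Equiv.swap (Fin.castAdd m a) (Fin.natAdd n i))
          * MonoidAlgebra.of ℂ (Equiv.Perm (Fin (n + m))) (π.viaEmbedding (natAddEmb n m)) := by
        refine Finset.sum_congr rfl fun i _ => ?_
        rw [← map_mul]

lemma TrP_S_stab (p : ℂ) (a : Fin n) {R : MonoidAlgebra ℂ (Equiv.Perm (Fin (n + m)))}
    (hR : R ∈ stab (Fin.castAdd m a)) :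
    TrP p ((∑ i : Fin m, MonoidAlgebra.of ℂ (Equiv.Perm (Fin (n + m)))
        (Equiv.swap (Fin.castAdd m a) (Fin.natAdd n i))) * R)
      = TrP p (R * ∑ i : Fin m, MonoidAlgebra.of ℂ (Equiv.Perm (Fin (n + m)))
        (Equiv.swap (Fin.castAdd m a) (Fin.natAdd n i))) := by
  rw [Finset.sum_mul, Finset.mul_sum, map_sum, map_sum]
  refine Finset.sum_congr rfl fun i _ => ?_
  exact TrP_swap_stab p (Fin.castAdd m a) (Fin.natAdd n i) (by simpa using a.2)
    (by simp only [Fin.coe_natAdd]; omega) hR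

lemma conj_list_prod {A : Type*} [Monoid A] (x y : A) (hxy : x * y = 1) (hyx : y * x = 1)
    (l : List A) : x * l.prod * y = (l.map fun a => x * a * y).prod := by
  induction l with
  | nil => simpa using hxy
  | cons h t ih =>
    rw [List.prod_cons, List.map_cons, List.prod_cons, ← ih]
    simp only [mul_assoc]
    congr 2
    rw [← mul_assoc, hyx, one_mul]

lemma finRange_succ_last (k : ℕ) :
    List.finRange (k + 1) = (List.finRange k).map Fin.castSucc ++ [Fin.last k] := by
  induction k with
  | zero => rfl
  | succ k ih =>
    conv_rhs => rw [List.finRange_succ]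
    rw [List.finRange_succ, ih]
    simp only [List.map_cons, List.map_append, List.map_map, List.map_singleton,
      Fin.succ_last, Fin.castSucc_zero, List.cons_append]
    congr 2

lemma bigProd_decomp (k : ℕ) (z : Fin (k + 1) → ℂ) (ℏ u : ℂ) :
    bigProd (k + 1) m z ℏ u
      = ((List.finRange k).reverse.map fun a =>
          factor (k + 1) m ℏ u (z a.succ) a.succ).prod
        * factor (k + 1) m ℏ u (z 0) 0 := by
  rw [bigProd_eq, List.finRange_succ, List.reverse_cons, List.map_append,
    List.prod_append, ← List.map_reverse, List.map_map]
  simp only [Function.comp_def, List.map_singleton, List.prod_singleton]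

lemma bigProd_conj_decomp (k : ℕ) (z : Fin (k + 1) → ℂ) (ℏ u : ℂ) :
    MonoidAlgebra.of ℂ (Equiv.Perm (Fin (k + 1 + m))) (Gam (finRotate (k + 1)))
        * bigProd (k + 1) m (fun a => z (finRotate (k + 1) a)) ℏ u
        * MonoidAlgebra.of ℂ (Equiv.Perm (Fin (k + 1 + m))) (Gam (finRotate (k + 1)))⁻¹
      = factor (k + 1) m ℏ u (z 0) 0
        * ((List.finRange k).reverse.map fun a =>
            factor (k + 1) m ℏ u (z a.succ) a.succ).prod := by
  have hγcast : ∀ a : Fin k, finRotate (k + 1) (Fin.castSucc a) = Fin.succ a := by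
    intro a
    rw [finRotate_succ_apply, Fin.coeSucc_eq_succ]
  rw [bigProd_eq, conj_list_prod _ _ (by rw [← map_mul, mul_inv_cancel, map_one])
    (by rw [← map_mul, inv_mul_cancel, map_one]), List.map_map]
  have hmap : (List.finRange (k + 1)).reverse.map
        ((fun x => MonoidAlgebra.of ℂ (Equiv.Perm (Fin (k + 1 + m))) (Gam (finRotate (k + 1))) * x
          * MonoidAlgebra.of ℂ (Equiv.Perm (Fin (k + 1 + m))) (Gam (finRotate (k + 1)))⁻¹)
          ∘ fun a => factor (k + 1) m ℏ u (z (finRotate (k + 1) a)) a)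
      = (List.finRange (k + 1)).reverse.map fun a =>
          factor (k + 1) m ℏ u (z (finRotate (k + 1) a)) (finRotate (k + 1) a) :=
    List.map_congr_left fun a _ => Gam_factor (finRotate (k + 1)) ℏ u (z (finRotate (k + 1) a)) a
  rw [hmap, finRange_succ_last, List.reverse_append, List.reverse_singleton,
    List.singleton_append, List.map_cons, List.prod_cons, finRotate_last]
  congr 1
  rw [← List.map_reverse, List.map_map]
  refine congrArg List.prod (List.map_congr_left fun a _ => ?_)
  show factor (k + 1) m ℏ u (z (finRotate (k + 1) (Fin.castSucc a)))
      (finRotate (k + 1) (Fin.castSucc a)) = _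
  rw [hγcast]

/-- with `γ = finRotate n` (the cycle `i ↦ i+1`, `n ↦ 1`),
`γ T_m^{(n)}(u;p;ℏ;z_2,...,z_n,z_1) γ⁻¹ = T_m^{(n)}(u;p;ℏ;z_1,...,z_n)`. -/
theorem stmt_16 (n m : ℕ) (z : Fin n → ℂ) (p ℏ u : ℂ) :
    MonoidAlgebra.of ℂ (Equiv.Perm (Fin n)) (finRotate n)
        * Tnm n m (fun a => z (finRotate n a)) p ℏ u
        * MonoidAlgebra.of ℂ (Equiv.Perm (Fin n)) (finRotate n)⁻¹
      = Tnm n m z p ℏ u := by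
  cases n with
  | zero =>
    have hz : (fun a => z (finRotate 0 a)) = z := funext fun a => a.elim0
    rw [hz]
    have h1 : finRotate 0 = 1 := rfl
    rw [h1, inv_one, map_one, one_mul, mul_one]
  | succ k =>
    unfold Tnm
    rw [← TrP_conj p (finRotate (k + 1))
      (thetaA (k + 1) m * bigProd (k + 1) m (fun a => z (finRotate (k + 1) a)) ℏ u)]
    have e1 : MonoidAlgebra.of ℂ (Equiv.Perm (Fin (k + 1 + m))) (Gam (finRotate (k + 1)))
        * (thetaA (k + 1) m * bigProd (k + 1) m (fun a => z (finRotate (k + 1) a)) ℏ u)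
        * MonoidAlgebra.of ℂ (Equiv.Perm (Fin (k + 1 + m))) (Gam (finRotate (k + 1)))⁻¹
        = thetaA (k + 1) m
          * (MonoidAlgebra.of ℂ (Equiv.Perm (Fin (k + 1 + m))) (Gam (finRotate (k + 1)))
            * bigProd (k + 1) m (fun a => z (finRotate (k + 1) a)) ℏ u
            * MonoidAlgebra.of ℂ (Equiv.Perm (Fin (k + 1 + m))) (Gam (finRotate (k + 1)))⁻¹) := by
      rw [← mul_assoc, Gam_thetaA_comm, mul_assoc (thetaA (k + 1) m), mul_assoc (thetaA (k + 1) m)]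
    rw [e1, bigProd_conj_decomp, bigProd_decomp]
    set Θ := thetaA (k + 1) m with hΘ
    set P := ((List.finRange k).reverse.map fun a =>
      factor (k + 1) m ℏ u (z a.succ) a.succ).prod with hP
    set S := ∑ i : Fin m, MonoidAlgebra.of ℂ (Equiv.Perm (Fin (k + 1 + m)))
      (Equiv.swap (Fin.castAdd m (0 : Fin (k + 1))) (Fin.natAdd (k + 1) i)) with hS
    have hstab : Θ * P ∈ stab (Fin.castAdd m (0 : Fin (k + 1))) := by
      refine mul_mem_stab (thetaA_mem_stab 0) (list_prod_mem_stab _ ?_)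
      intro x hx
      obtain ⟨a, _, rfl⟩ := List.mem_map.mp hx
      exact factor_mem_stab ℏ u (z a.succ) 0 a.succ (Fin.succ_ne_zero a).symm
    have hSΘ : Θ * S = S * Θ := thetaA_S_comm 0
    have hfac : factor (k + 1) m ℏ u (z 0) 0
        = algebraMap ℂ (MonoidAlgebra ℂ (Equiv.Perm (Fin (k + 1 + m)))) (u - z 0) + ℏ • S := rfl
    have lhs_eq : Θ * (factor (k + 1) m ℏ u (z 0) 0 * P)
        = (u - z 0) • (Θ * P) + ℏ • (S * (Θ * P)) := by
      rw [hfac, add_mul, mul_add]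
      congr 1
      · rw [← Algebra.smul_def, mul_smul_comm]
      · rw [smul_mul_assoc, mul_smul_comm, ← mul_assoc, hSΘ, mul_assoc]
    have rhs_eq : Θ * (P * factor (k + 1) m ℏ u (z 0) 0)
        = (u - z 0) • (Θ * P) + ℏ • ((Θ * P) * S) := by
      rw [hfac, mul_add, mul_add]
      congr 1
      · rw [← mul_assoc, ← Algebra.commutes, ← Algebra.smul_def]
      · rw [mul_smul_comm, mul_smul_comm, ← mul_assoc]
    have hcyc : TrP p (S * (Θ * P)) = TrP p ((Θ * P) * S) := by
      rw [hS]
      exact TrP_S_stab p 0 hstab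
    rw [lhs_eq, rhs_eq]
    simp only [map_add, map_smul]
    rw [hcyc]

end Bethe
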